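/- Let L be self-adjoint on H with L ≥ κ·I, κ > 0, spectral measure dQ_λ. Fix r > 0, a nonzero y ∈ H, and let h_ε(t) = φ_ε(t)·y with φ_ε as the approximate δ'(t−r) defined by φ_ε = 0 on [0,r−2ε), 1/ε² on [r−2ε,r−ε), −1/ε² on [r−ε,r), 0 on [r,∞). Then the Duhamel solutions satisfy ‖y − v^{h_ε}(r)‖² = ∫_κ^∞ |1 − ψ_ε(λ)|² d‖Q_λ y‖², and hence v^{h_ε}(r) → y in H as ε → 0. Consequently, every closed subspace A ⊆ H satisfies A ⊆ closure{v^h(r) : h ∈ L²_loc((0,∞); A)} for every r > 0. -/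

import Mathlib

open scoped InnerProductSpace
open MeasureTheory Filter Topology

/-- The Duhamel propagator `L^{-1/2} sin(t L^{1/2})` via the functional calculus. -/
noncomputable def duhamelKernel {H : Type*} [NormedAddCommGroup H]
    [InnerProductSpace ℂ H] [CompleteSpace H] (L : H →L[ℂ] H) (t : ℝ) : H →L[ℂ] H :=
  cfc (fun lam : ℝ => Real.sin (Real.sqrt lam * t) / Real.sqrt lam) L

/-- The trajectory `v^h(t) = ∫₀ᵗ L^{-1/2} sin((t-s)L^{1/2}) h(s) ds`. -/
noncomputable def trajectory {H : Type*} [NormedAddCommGroup H]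
    [InnerProductSpace ℂ H] [CompleteSpace H] (L : H →L[ℂ] H) (h : ℝ → H) (t : ℝ) : H :=
  ∫ s in (0 : ℝ)..t, duhamelKernel L (t - s) (h s)

/-- The approximation `φ_ε` of `δ'(t - r)`. -/
noncomputable def phiApprox (r ε t : ℝ) : ℝ :=
  if t < r - 2 * ε then 0
  else if t < r - ε then 1 / ε ^ 2
  else if t < r then -(1 / ε ^ 2)
  else 0

/-- `ψ_ε(λ) = ∫₀ʳ (sin(√λ(r-t))/√λ) φ_ε(t) dt`. -/
noncomputable def psiApprox (r ε lam : ℝ) : ℝ :=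
  ∫ t in (0 : ℝ)..r, Real.sin (Real.sqrt lam * (r - t)) / Real.sqrt lam * phiApprox r ε t

namespace WaveAux

/-- continuous modification of the kernel function -/
noncomputable def fkerC (κ t lam : ℝ) : ℝ :=
  Real.sin (Real.sqrt (max lam κ) * t) / Real.sqrt (max lam κ)

/-- closed form of `ψ_ε`, continuous in `lam` -/
noncomputable def psiC (κ ε lam : ℝ) : ℝ :=
  (2 * Real.cos (Real.sqrt (max lam κ) * ε) - Real.cos (Real.sqrt (max lam κ) * (2 * ε)) - 1)
    / (ε ^ 2 * max lam κ)

lemma sin_int (c a b : ℝ) (hc : c ≠ 0) :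
    ∫ t in a..b, Real.sin (c * t) / c
      = (Real.cos (c * a) - Real.cos (c * b)) / c ^ 2 := by
  have h : ∀ t ∈ Set.uIcc a b,
      HasDerivAt (fun u => -(Real.cos (c * u)) / c ^ 2) (Real.sin (c * t) / c) t := by
    intro t _
    have h1 : HasDerivAt (fun u : ℝ => c * u) c t := by
      simpa using (hasDerivAt_id t).const_mul c
    have h2 : HasDerivAt (fun u : ℝ => Real.cos (c * u)) (-Real.sin (c * t) * c) t :=
      (Real.hasDerivAt_cos (c * t)).comp t h1
    have h3 := (h2.neg).div_const (c ^ 2)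
    refine h3.congr_deriv ?_
    rw [neg_mul, neg_neg, pow_two, mul_div_mul_right _ _ hc]
  rw [intervalIntegral.integral_eq_sub_of_hasDerivAt h
    ((Continuous.div_const (Real.continuous_sin.comp (continuous_const.mul continuous_id)) c).intervalIntegrable a b)]
  ring

lemma phi_measurable (r ε : ℝ) : Measurable (phiApprox r ε) := by
  unfold phiApprox
  exact Measurable.ite measurableSet_Iio measurable_const
    (Measurable.ite measurableSet_Iio measurable_const
      (Measurable.ite measurableSet_Iio measurable_const measurable_const))

lemma phi_bound (r ε : ℝ) (hε : 0 < ε) (t : ℝ) : ‖phiApprox r ε t‖ ≤ 1 / ε ^ 2 := by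
  have h : (0:ℝ) ≤ 1 / ε ^ 2 := by positivity
  unfold phiApprox
  split_ifs <;> simp [abs_of_nonneg h, h, Real.norm_eq_abs] <;> positivity

lemma ae_ne (c : ℝ) : ∀ᵐ s : ℝ, s ≠ c := by
  have : volume ({c} : Set ℝ) = 0 := Real.volume_singleton
  rw [ae_iff]
  simpa using this

lemma split_integral {E : Type*} [NormedAddCommGroup E] [NormedSpace ℝ E] [CompleteSpace E]
    (r ε : ℝ) (hε : 0 < ε) (h2ε : 2 * ε < r) (W : ℝ → E) (hW : Continuous W) :
    ∫ s in (0:ℝ)..r, phiApprox r ε s • W s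
      = (1/ε^2 : ℝ) • (∫ s in (r - 2*ε)..(r - ε), W s)
        - (1/ε^2 : ℝ) • (∫ s in (r - ε)..r, W s) := by
  have hgint : ∀ a b : ℝ, IntervalIntegrable (fun s => phiApprox r ε s • W s) volume a b := by
    intro a b
    rw [intervalIntegrable_iff]
    obtain ⟨C, hC⟩ := (isCompact_uIcc (a := a) (b := b)).exists_bound_of_continuousOn
      hW.continuousOn
    refine MeasureTheory.Measure.integrableOn_of_bounded (M := (1/ε^2) * C) ?_ ?_ ?_
    · rw [Set.uIoc]; exact measure_Ioc_lt_top.ne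
    · exact ((phi_measurable r ε).aemeasurable.aestronglyMeasurable).smul
        hW.aestronglyMeasurable
    · refine (ae_restrict_mem measurableSet_uIoc).mono fun s hs => ?_
      have hs' : s ∈ Set.uIcc a b := Set.uIoc_subset_uIcc hs
      rw [norm_smul]
      exact mul_le_mul (phi_bound r ε hε s) (hC s hs') (norm_nonneg _) (by positivity)
  have h02 : (0:ℝ) ≤ r - 2*ε := by linarith
  have key1 : ∫ s in (0:ℝ)..(r - 2*ε), phiApprox r ε s • W s = 0 := by
    rw [intervalIntegral.integral_congr_ae (g := fun _ => (0:E))]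
    · simp
    · filter_upwards [ae_ne (r - 2*ε)] with s hs hmem
      rw [Set.uIoc_of_le h02] at hmem
      have : s < r - 2*ε := lt_of_le_of_ne hmem.2 hs
      unfold phiApprox
      rw [if_pos this, zero_smul]
  have key2 : ∫ s in (r - 2*ε)..(r - ε), phiApprox r ε s • W s
      = (1/ε^2 : ℝ) • ∫ s in (r - 2*ε)..(r - ε), W s := by
    rw [← intervalIntegral.integral_smul]
    apply intervalIntegral.integral_congr_ae
    filter_upwards [ae_ne (r - ε)] with s hs hmem
    rw [Set.uIoc_of_le (by linarith : r - 2*ε ≤ r - ε)] at hmem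
    have h1 : ¬ s < r - 2*ε := not_lt.2 hmem.1.le
    have h2 : s < r - ε := lt_of_le_of_ne hmem.2 hs
    unfold phiApprox
    rw [if_neg h1, if_pos h2]
  have key3 : ∫ s in (r - ε)..r, phiApprox r ε s • W s
      = (-(1/ε^2) : ℝ) • ∫ s in (r - ε)..r, W s := by
    rw [← intervalIntegral.integral_smul]
    apply intervalIntegral.integral_congr_ae
    filter_upwards [ae_ne r] with s hs hmem
    rw [Set.uIoc_of_le (by linarith : r - ε ≤ r)] at hmem
    have h1 : ¬ s < r - 2*ε := not_lt.2 (by linarith [hmem.1] : r - 2*ε ≤ s)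
    have h2 : ¬ s < r - ε := not_lt.2 hmem.1.le
    have h3 : s < r := lt_of_le_of_ne hmem.2 hs
    unfold phiApprox
    rw [if_neg h1, if_neg h2, if_pos h3]

  rw [← intervalIntegral.integral_add_adjacent_intervals (hgint 0 (r - 2*ε)) (hgint (r - 2*ε) r),
    ← intervalIntegral.integral_add_adjacent_intervals (hgint (r - 2*ε) (r - ε)) (hgint (r - ε) r),
    key1, key2, key3]
  module


section Hilbert

variable {H : Type*} [NormedAddCommGroup H] [InnerProductSpace ℂ H] [CompleteSpace H]
variable (L : H →L[ℂ] H)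

lemma spec_subset (hLsa : IsSelfAdjoint L) {κ : ℝ}
    (hLκ : ∀ x : H, κ * ‖x‖ ^ 2 ≤ (⟪L x, x⟫_ℂ).re) :
    spectrum ℝ L ⊆ Set.Ici κ := by
  intro x hx
  have hpos : (0 : H →L[ℂ] H) ≤ L - algebraMap ℝ (H →L[ℂ] H) κ := by
    rw [ContinuousLinearMap.nonneg_iff_isPositive]
    constructor
    · exact (hLsa.sub ((IsSelfAdjoint.all κ).algebraMap _)).isSymmetric
    · intro v
      rw [ContinuousLinearMap.reApplyInnerSelf_apply]
      have happ : (L - algebraMap ℝ (H →L[ℂ] H) κ) v = L v - κ • v := by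
        rw [ContinuousLinearMap.sub_apply, Algebra.algebraMap_eq_smul_one,
          ContinuousLinearMap.smul_apply, ContinuousLinearMap.one_apply]
      rw [happ, inner_sub_left]
      have h2 : ⟪(κ:ℝ) • v, v⟫_ℂ = (κ:ℝ) • ⟪v, v⟫_ℂ := by
        rw [RCLike.real_smul_eq_coe_smul (K := ℂ), inner_smul_real_left]
      rw [map_sub, h2]
      have h4 : RCLike.re ((κ:ℝ) • ⟪v, v⟫_ℂ) = κ * ‖v‖ ^ 2 := by
        rw [RCLike.smul_re, inner_self_eq_norm_sq (𝕜 := ℂ) v]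
      rw [h4]
      have h5 : RCLike.re ⟪L v, v⟫_ℂ = (⟪L v, v⟫_ℂ).re := rfl
      linarith [hLκ v, h5]
  have h0 : x - κ ∈ spectrum ℝ (L - algebraMap ℝ (H →L[ℂ] H) κ) := by
    rw [← spectrum.sub_singleton_eq]
    exact Set.sub_mem_sub hx rfl
  have := spectrum_nonneg_of_nonneg hpos h0
  simpa using sub_nonneg.mp this

noncomputable def Phi (hLsa : IsSelfAdjoint L) (y : H) : C(spectrum ℝ L, ℝ) →L[ℝ] H :=
  { toFun := fun g => cfcHom (R := ℝ) hLsa g y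
    map_add' := fun g₁ g₂ => by
      show cfcHom (R := ℝ) hLsa (g₁ + g₂) y = _
      rw [map_add, ContinuousLinearMap.add_apply]
    map_smul' := fun c g => by
      show cfcHom (R := ℝ) hLsa (c • g) y = _
      rw [_root_.map_smul, ContinuousLinearMap.smul_apply]
      rfl
    cont := (ContinuousLinearMap.apply ℂ H y).continuous.comp (cfcHom_continuous hLsa) }

variable {κ : ℝ}

lemma sqrt_max_pos (hκ : 0 < κ) (lam : ℝ) : 0 < Real.sqrt (max lam κ) :=
  Real.sqrt_pos.2 (lt_max_of_lt_right hκ)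

lemma fkerC_cont2 (hκ : 0 < κ) : Continuous fun p : ℝ × ℝ => fkerC κ p.1 p.2 := by
  have hden : Continuous fun lam : ℝ => Real.sqrt (max lam κ) :=
    Real.continuous_sqrt.comp (continuous_id.max continuous_const)
  exact (Real.continuous_sin.comp ((hden.comp continuous_snd).mul continuous_fst)).div
    (hden.comp continuous_snd) (fun p => (sqrt_max_pos hκ p.2).ne')

set_option maxHeartbeats 1000000 in
lemma cfc_fkerC_cont (hLsa : IsSelfAdjoint L) (hκ : 0 < κ) (y : H) :
    Continuous fun t => cfc (fkerC κ t) L y := by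
  let Gc : C(ℝ × spectrum ℝ L, ℝ) :=
    (⟨fun p : ℝ × ℝ => fkerC κ p.1 p.2, fkerC_cont2 hκ⟩ : C(ℝ × ℝ, ℝ)).comp
      ((ContinuousMap.id ℝ).prodMap ⟨fun x : spectrum ℝ L => (x : ℝ), continuous_subtype_val⟩)
  have h1 : ∀ t : ℝ, cfc (fkerC κ t) L y = Phi L hLsa y (Gc.curry t) := by
    intro t
    have hct : ContinuousOn (fkerC κ t) (spectrum ℝ L) :=
      ((fkerC_cont2 hκ).comp (Continuous.prodMk_right t)).continuousOn
    rw [cfc_apply (fkerC κ t) L hLsa hct]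
    show _ = cfcHom hLsa (Gc.curry t) y
    congr 1
  have : Continuous fun t => Phi L hLsa y (Gc.curry t) :=
    (Phi L hLsa y).continuous.comp Gc.curry.continuous
  exact this.congr fun t => (h1 t).symm

set_option maxHeartbeats 1000000 in
lemma integral_cfc_eq (hLsa : IsSelfAdjoint L) (hκ : 0 < κ) (y : H) (a b : ℝ) :
    ∫ t in a..b, cfc (fkerC κ t) L y
      = cfc (fun lam => (Real.cos (Real.sqrt (max lam κ) * a)
          - Real.cos (Real.sqrt (max lam κ) * b)) / Real.sqrt (max lam κ) ^ 2) L y := by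
  have hden : Continuous fun lam : ℝ => Real.sqrt (max lam κ) :=
    Real.continuous_sqrt.comp (continuous_id.max continuous_const)
  have hA : Continuous (fun lam => (Real.cos (Real.sqrt (max lam κ) * a)
      - Real.cos (Real.sqrt (max lam κ) * b)) / Real.sqrt (max lam κ) ^ 2) :=
    ((Real.continuous_cos.comp (hden.mul continuous_const)).sub
      (Real.continuous_cos.comp (hden.mul continuous_const))).div (hden.pow 2)
      (fun lam => pow_ne_zero _ (sqrt_max_pos hκ lam).ne')
  let Gc : C(ℝ × spectrum ℝ L, ℝ) :=
    (⟨fun p : ℝ × ℝ => fkerC κ p.1 p.2, fkerC_cont2 hκ⟩ : C(ℝ × ℝ, ℝ)).comp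
      ((ContinuousMap.id ℝ).prodMap ⟨fun x : spectrum ℝ L => (x : ℝ), continuous_subtype_val⟩)
  let F : C(ℝ, C(spectrum ℝ L, ℝ)) := Gc.curry
  have hFi : IntervalIntegrable (fun t => F t) volume a b := F.continuous.intervalIntegrable a b
  have h1 : ∀ t : ℝ, cfc (fkerC κ t) L y = Phi L hLsa y (F t) := by
    intro t
    have hct : ContinuousOn (fkerC κ t) (spectrum ℝ L) :=
      ((fkerC_cont2 hκ).comp (Continuous.prodMk_right t)).continuousOn
    rw [cfc_apply (fkerC κ t) L hLsa hct]
    show _ = cfcHom hLsa (F t) y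
    congr 1
  rw [intervalIntegral.integral_congr (g := fun t => Phi L hLsa y (F t)) (fun t _ => h1 t)]
  rw [ContinuousLinearMap.intervalIntegral_comp_comm _ hFi]
  rw [cfc_apply _ L hLsa hA.continuousOn]
  show cfcHom hLsa (∫ t in a..b, F t) y = _
  refine congrArg (fun g => cfcHom (R := ℝ) hLsa g y) ?_
  ext lam
  calc (∫ t in a..b, F t) lam
      = ContinuousMap.evalCLM ℝ lam (∫ t in a..b, F t) := rfl
    _ = ∫ t in a..b, ContinuousMap.evalCLM ℝ lam (F t) :=
        (ContinuousLinearMap.intervalIntegral_comp_comm _ hFi).symm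
    _ = ∫ t in a..b, Real.sin (Real.sqrt (max (lam : ℝ) κ) * t) / Real.sqrt (max (lam : ℝ) κ) :=
        rfl
    _ = (Real.cos (Real.sqrt (max (lam : ℝ) κ) * a)
          - Real.cos (Real.sqrt (max (lam : ℝ) κ) * b)) / Real.sqrt (max (lam : ℝ) κ) ^ 2 :=
        sin_int _ a b (sqrt_max_pos hκ (lam : ℝ)).ne'

lemma duhamel_eq (hLsa : IsSelfAdjoint L) (hS : spectrum ℝ L ⊆ Set.Ici κ) (t : ℝ) :
    duhamelKernel L t = cfc (fkerC κ t) L := by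
  unfold duhamelKernel
  apply cfc_congr
  intro lam hlam
  unfold fkerC
  rw [max_eq_left (hS hlam)]

lemma traj_eq (hLsa : IsSelfAdjoint L) (hκ : 0 < κ) (hS : spectrum ℝ L ⊆ Set.Ici κ) (y : H)
    {r ε : ℝ} (hε : 0 < ε) (h2ε : 2 * ε < r) :
    trajectory L (fun t => phiApprox r ε t • y) r = cfc (psiC κ ε) L y := by
  have hstep : ∀ s : ℝ, duhamelKernel L (r - s) ((phiApprox r ε s) • y)
      = phiApprox r ε s • (cfc (fkerC κ (r - s)) L y) := by
    intro s
    rw [ContinuousLinearMap.map_smul_of_tower, duhamel_eq L hLsa hS]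
  unfold trajectory
  rw [intervalIntegral.integral_congr
    (g := fun s => phiApprox r ε s • (cfc (fkerC κ (r - s)) L y)) (fun s _ => hstep s)]
  have hWc : Continuous fun s : ℝ => cfc (fkerC κ (r - s)) L y := by
    exact (cfc_fkerC_cont L hLsa hκ y).comp (continuous_const.sub continuous_id)
  rw [split_integral r ε hε h2ε (fun s => cfc (fkerC κ (r - s)) L y) hWc]
  rw [intervalIntegral.integral_comp_sub_left (fun t => cfc (fkerC κ t) L y) r,
    intervalIntegral.integral_comp_sub_left (fun t => cfc (fkerC κ t) L y) r,
    integral_cfc_eq L hLsa hκ y _ _, integral_cfc_eq L hLsa hκ y _ _]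
  have hden : Continuous fun lam : ℝ => Real.sqrt (max lam κ) :=
    Real.continuous_sqrt.comp (continuous_id.max continuous_const)
  have hAcont : ∀ c d : ℝ, Continuous (fun lam => (Real.cos (Real.sqrt (max lam κ) * c)
      - Real.cos (Real.sqrt (max lam κ) * d)) / Real.sqrt (max lam κ) ^ 2) := fun c d =>
    ((Real.continuous_cos.comp (hden.mul continuous_const)).sub
      (Real.continuous_cos.comp (hden.mul continuous_const))).div (hden.pow 2)
      (fun lam => pow_ne_zero _ (sqrt_max_pos hκ lam).ne')
  set A₁ : ℝ → ℝ := fun lam => (Real.cos (Real.sqrt (max lam κ) * (r - (r - ε)))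
      - Real.cos (Real.sqrt (max lam κ) * (r - (r - 2*ε)))) / Real.sqrt (max lam κ) ^ 2 with hA₁
  set A₂ : ℝ → ℝ := fun lam => (Real.cos (Real.sqrt (max lam κ) * (r - r))
      - Real.cos (Real.sqrt (max lam κ) * (r - (r - ε)))) / Real.sqrt (max lam κ) ^ 2 with hA₂
  have e1 : cfc (psiC κ ε) L
      = cfc (fun lam => (1/ε^2 : ℝ) • A₁ lam - (1/ε^2 : ℝ) • A₂ lam) L := by
    apply cfc_congr
    intro lam _
    have hm0 : (0:ℝ) ≤ max lam κ := le_max_of_le_right hκ.le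
    have hmne : max lam κ ≠ 0 := by positivity
    rw [hA₁, hA₂]
    simp only [smul_eq_mul]
    rw [show r - (r - ε) = ε by ring, show r - (r - 2*ε) = 2*ε by ring, sub_self,
      mul_zero, Real.cos_zero, Real.sq_sqrt hm0]
    unfold psiC
    field_simp
    ring
  rw [e1, cfc_sub (fun lam => (1/ε^2 : ℝ) • A₁ lam) (fun lam => (1/ε^2 : ℝ) • A₂ lam) L (((continuous_const (y := (1/ε^2:ℝ))).smul (hAcont _ _)).continuousOn)
      (((continuous_const (y := (1/ε^2:ℝ))).smul (hAcont _ _)).continuousOn),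
    cfc_smul (1/ε^2 : ℝ) A₁ L ((hAcont _ _).continuousOn),
    cfc_smul (1/ε^2 : ℝ) A₂ L ((hAcont _ _).continuousOn)]
  rw [ContinuousLinearMap.sub_apply, ContinuousLinearMap.smul_apply,
    ContinuousLinearMap.smul_apply]

lemma psiApprox_eq (hκ : 0 < κ) {r ε lam : ℝ} (hε : 0 < ε) (h2ε : 2 * ε < r) (hlam : κ ≤ lam) :
    psiApprox r ε lam = psiC κ ε lam := by
  have hlam0 : 0 < lam := lt_of_lt_of_le hκ hlam
  have hc : 0 < Real.sqrt lam := Real.sqrt_pos.2 hlam0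
  unfold psiApprox
  rw [show (∫ t in (0:ℝ)..r, Real.sin (Real.sqrt lam * (r - t)) / Real.sqrt lam * phiApprox r ε t)
      = ∫ t in (0:ℝ)..r, phiApprox r ε t • (Real.sin (Real.sqrt lam * (r - t)) / Real.sqrt lam)
    from intervalIntegral.integral_congr (fun t _ => by rw [smul_eq_mul]; ring)]
  rw [split_integral r ε hε h2ε (fun t => Real.sin (Real.sqrt lam * (r - t)) / Real.sqrt lam)
    ((Real.continuous_sin.comp (continuous_const.mul (continuous_const.sub continuous_id))).div_const _)]
  rw [intervalIntegral.integral_comp_sub_left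
      (fun u => Real.sin (Real.sqrt lam * u) / Real.sqrt lam) r,
    intervalIntegral.integral_comp_sub_left
      (fun u => Real.sin (Real.sqrt lam * u) / Real.sqrt lam) r]
  rw [sin_int _ _ _ hc.ne', sin_int _ _ _ hc.ne']
  unfold psiC
  rw [max_eq_left hlam, Real.sq_sqrt hlam0.le]
  rw [show r - (r - ε) = ε by ring, show r - (r - 2*ε) = 2*ε by ring, sub_self,
    mul_zero, Real.cos_zero]
  have hl : lam ≠ 0 := hlam0.ne'
  have he : ε ≠ 0 := hε.ne'
  ring

lemma psiC_cont (hκ : 0 < κ) {ε : ℝ} (hε : ε ≠ 0) : Continuous (psiC κ ε) := by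
  unfold psiC
  have hden : Continuous fun lam : ℝ => Real.sqrt (max lam κ) :=
    Real.continuous_sqrt.comp (continuous_id.max continuous_const)
  refine Continuous.div ?_ ?_ ?_
  · exact ((continuous_const.mul (Real.continuous_cos.comp (hden.mul continuous_const))).sub
      (Real.continuous_cos.comp (hden.mul continuous_const))).sub continuous_const
  · exact continuous_const.mul (continuous_id.max continuous_const)
  · intro lam
    have : 0 < max lam κ := lt_max_of_lt_right hκ
    positivity

lemma one_sub_cos (x : ℝ) : 1 - Real.cos x = 2 * Real.sin (x / 2) ^ 2 := by
  have h : Real.cos (2 * (x / 2)) = Real.cos (x / 2) ^ 2 - Real.sin (x / 2) ^ 2 :=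
    Real.cos_two_mul' (x / 2)
  have h2 : Real.cos x = Real.cos (x / 2) ^ 2 - Real.sin (x / 2) ^ 2 := by
    rw [← h]; congr 1; ring
  have h3 := Real.sin_sq_add_cos_sq (x / 2)
  linarith

lemma psiC_abs_le (hκ : 0 < κ) {ε : ℝ} (hε : 0 < ε) (lam : ℝ) : |psiC κ ε lam| ≤ 1 := by
  unfold psiC
  set m := max lam κ with hm
  have hm0 : 0 < m := lt_max_of_lt_right hκ
  set θ := Real.sqrt m * ε with hθdef
  have hθ0 : 0 < θ := mul_pos (Real.sqrt_pos.2 hm0) hε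
  have hθsq : θ ^ 2 = ε ^ 2 * m := by rw [hθdef, mul_pow, Real.sq_sqrt hm0.le]; ring
  have hnum : 2 * Real.cos θ - Real.cos (Real.sqrt m * (2 * ε)) - 1
      = 2 * Real.cos θ * (1 - Real.cos θ) := by
    rw [show Real.sqrt m * (2 * ε) = 2 * θ by rw [hθdef]; ring, Real.cos_two_mul]; ring
  rw [hnum, ← hθsq, abs_div]
  have hc3 : 1 - Real.cos θ ≤ θ ^ 2 / 2 := by
    rw [one_sub_cos]
    have := Real.sin_sq_le_sq (x := θ / 2)
    nlinarith
  have h1 : |2 * Real.cos θ * (1 - Real.cos θ)| ≤ θ ^ 2 := by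
    rw [abs_le]
    constructor <;>
      nlinarith [Real.cos_le_one θ, Real.neg_one_le_cos θ, hc3, sq_nonneg θ]
  rw [abs_of_nonneg (sq_nonneg θ)]
  exact div_le_one_of_le₀ h1 (sq_nonneg θ)

lemma sin_div_tendsto : Tendsto (fun t : ℝ => Real.sin t / t) (𝓝[≠] (0:ℝ)) (𝓝 1) := by
  have h := hasDerivAt_iff_tendsto_slope.mp (Real.hasDerivAt_sin 0)
  rw [Real.cos_zero] at h
  exact h.congr fun t => by simp [slope_def_field]

lemma Hfun_tendsto :
    Tendsto (fun θ : ℝ => (2 * Real.cos θ - Real.cos (2 * θ) - 1) / θ ^ 2)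
      (𝓝[≠] (0:ℝ)) (𝓝 1) := by
  have hc : Tendsto Real.cos (𝓝[≠] (0:ℝ)) (𝓝 1) := by
    have h := Real.continuous_cos.tendsto 0
    rw [Real.cos_zero] at h
    exact h.mono_left nhdsWithin_le_nhds
  have hhalf : Tendsto (fun θ : ℝ => θ / 2) (𝓝[≠] (0:ℝ)) (𝓝[≠] (0:ℝ)) := by
    rw [tendsto_nhdsWithin_iff]
    constructor
    · simpa using ((continuous_id.div_const (2:ℝ)).tendsto 0).mono_left nhdsWithin_le_nhds
    · exact eventually_mem_nhdsWithin.mono fun θ hθ =>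
        div_ne_zero (Set.mem_compl_singleton_iff.mp hθ) two_ne_zero
  have hs := sin_div_tendsto.comp hhalf
  have hmain := hc.mul (hs.pow 2)
  rw [show (1:ℝ) * 1 ^ 2 = 1 by norm_num] at hmain
  refine hmain.congr' ?_
  filter_upwards [self_mem_nhdsWithin] with θ hθ
  have hθ0 : θ ≠ 0 := Set.mem_compl_singleton_iff.mp hθ
  have h1 : 2 * Real.cos θ - Real.cos (2 * θ) - 1 = 2 * Real.cos θ * (1 - Real.cos θ) := by
    rw [Real.cos_two_mul]; ring
  have h2 : 1 - Real.cos θ = 2 * Real.sin (θ / 2) ^ 2 := one_sub_cos θ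
  show Real.cos θ * (Real.sin (θ / 2) / (θ / 2)) ^ 2
      = (2 * Real.cos θ - Real.cos (2 * θ) - 1) / θ ^ 2
  rw [h1, h2, div_pow]
  field_simp

lemma psiC_tendsto (hκ : 0 < κ) (lam : ℝ) :
    Tendsto (fun ε => psiC κ ε lam) (𝓝[>] (0:ℝ)) (𝓝 1) := by
  have hm0 : 0 < max lam κ := lt_max_of_lt_right hκ
  have hθ : Tendsto (fun ε : ℝ => Real.sqrt (max lam κ) * ε) (𝓝[>] (0:ℝ)) (𝓝[≠] (0:ℝ)) := by
    rw [tendsto_nhdsWithin_iff]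
    constructor
    · simpa using ((continuous_mul_left (Real.sqrt (max lam κ))).tendsto (0:ℝ)).mono_left
        nhdsWithin_le_nhds
    · exact eventually_mem_nhdsWithin.mono fun ε hε =>
        Set.mem_compl_singleton_iff.mpr
          (mul_ne_zero (Real.sqrt_pos.2 hm0).ne' (ne_of_gt hε))
  have h := Hfun_tendsto.comp hθ
  refine h.congr fun ε => ?_
  show (2 * Real.cos (Real.sqrt (max lam κ) * ε)
      - Real.cos (2 * (Real.sqrt (max lam κ) * ε)) - 1) / (Real.sqrt (max lam κ) * ε) ^ 2
      = psiC κ ε lam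
  unfold psiC
  rw [show 2 * (Real.sqrt (max lam κ) * ε) = Real.sqrt (max lam κ) * (2 * ε) by ring,
    show (Real.sqrt (max lam κ) * ε) ^ 2 = ε ^ 2 * max lam κ by
      rw [mul_pow, Real.sq_sqrt hm0.le]; ring]

lemma norm_eq (hLsa : IsSelfAdjoint L) (hκ : 0 < κ) {ε : ℝ} (hε : ε ≠ 0) (y : H)
    (ν : Measure ℝ)
    (hν : ∀ (f : ℝ → ℝ), Continuous f → (⟪cfc f L y, y⟫_ℂ).re = ∫ lam, f lam ∂ν) :
    ‖y - cfc (psiC κ ε) L y‖ ^ 2 = ∫ lam, (1 - psiC κ ε lam) ^ 2 ∂ν := by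
  have hψc : Continuous (psiC κ ε) := psiC_cont hκ hε
  set g : ℝ → ℝ := fun lam => 1 - psiC κ ε lam with hg
  have hgc : Continuous g := continuous_const.sub hψc
  have h1 : cfc g L y = y - cfc (psiC κ ε) L y := by
    have e : cfc g L = 1 - cfc (psiC κ ε) L := by
      have e0 : cfc g L = cfc (fun lam => (fun _ : ℝ => (1:ℝ)) lam - psiC κ ε lam) L := rfl
      rw [e0, cfc_sub _ _ L (continuous_const.continuousOn) hψc.continuousOn,
        cfc_const 1 L hLsa, map_one]
    rw [e, ContinuousLinearMap.sub_apply, ContinuousLinearMap.one_apply]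
  rw [← h1]
  have hT : IsSelfAdjoint (cfc g L) := cfc_predicate g L
  have h2 : (cfc g L) ((cfc g L) y) = cfc (fun lam => g lam * g lam) L y := by
    rw [cfc_mul g g L hgc.continuousOn hgc.continuousOn, ContinuousLinearMap.mul_apply]
  have h4 : ⟪(cfc g L) ((cfc g L) y), y⟫_ℂ = ⟪(cfc g L) y, (cfc g L) y⟫_ℂ := by
    have h5 := ContinuousLinearMap.adjoint_inner_left (cfc g L) y ((cfc g L) y)
    rwa [ContinuousLinearMap.isSelfAdjoint_iff'.mp hT] at h5
  have h3 : ‖cfc g L y‖ ^ 2 = (⟪cfc (fun lam => g lam * g lam) L y, y⟫_ℂ).re := by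
    rw [← h2, h4]
    exact (inner_self_eq_norm_sq (𝕜 := ℂ) _).symm
  rw [h3, hν (fun lam => g lam * g lam) (hgc.mul hgc)]
  refine integral_congr_ae (Filter.Eventually.of_forall fun lam => ?_)
  simp only [hg]
  ring

end Hilbert

end WaveAux

theorem wave_approximation_of_states
    (H : Type*) [NormedAddCommGroup H] [InnerProductSpace ℂ H] [CompleteSpace H]
    (L : H →L[ℂ] H) (hLsa : IsSelfAdjoint L)
    (κ : ℝ) (hκ : 0 < κ) (hLκ : ∀ x : H, κ * ‖x‖ ^ 2 ≤ (⟪L x, x⟫_ℂ).re)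
    (ν : H → Measure ℝ)
    (hνfin : ∀ y : H, (ν y) Set.univ = ENNReal.ofReal (‖y‖ ^ 2))
    (hνsupp : ∀ y : H, (ν y) (Set.Iio κ) = 0)
    (hνcfc : ∀ (f : ℝ → ℝ), Continuous f → ∀ y : H,
      (⟪cfc f L y, y⟫_ℂ).re = ∫ lam, f lam ∂(ν y))
    (r : ℝ) (hr : 0 < r) (y : H) (hy : y ≠ 0) :
    (∀ ε : ℝ, 0 < ε → 2 * ε < r →
      ‖y - trajectory L (fun t => phiApprox r ε t • y) r‖ ^ 2 =
        ∫ lam, (1 - psiApprox r ε lam) ^ 2 ∂(ν y)) ∧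
    Tendsto (fun ε : ℝ => trajectory L (fun t => phiApprox r ε t • y) r)
      (nhdsWithin 0 (Set.Ioi 0)) (nhds y) ∧
    (∀ A : Submodule ℂ H, IsClosed (A : Set H) → y ∈ A →
      y ∈ closure {v : H | ∃ h : ℝ → H, LocallyIntegrable h volume ∧
        (∀ s : ℝ, h s ∈ A) ∧ v = trajectory L h r}) := by
  have hS : spectrum ℝ L ⊆ Set.Ici κ := WaveAux.spec_subset L hLsa hLκ
  haveI : IsFiniteMeasure (ν y) := ⟨by rw [hνfin]; exact ENNReal.ofReal_lt_top⟩
  have hae : ∀ᵐ lam ∂(ν y), κ ≤ lam := by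
    have h := (MeasureTheory.measure_eq_zero_iff_ae_notMem).mp (hνsupp y)
    filter_upwards [h] with lam hlam
    exact not_lt.mp (by simpa [Set.mem_Iio] using hlam)
  have hpart1 : ∀ ε : ℝ, 0 < ε → 2 * ε < r →
      ‖y - trajectory L (fun t => phiApprox r ε t • y) r‖ ^ 2 =
        ∫ lam, (1 - psiApprox r ε lam) ^ 2 ∂(ν y) := by
    intro ε hε h2ε
    rw [WaveAux.traj_eq L hLsa hκ hS y hε h2ε,
      WaveAux.norm_eq L hLsa hκ hε.ne' y (ν y) (fun f hf => hνcfc f hf y)]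
    refine integral_congr_ae ?_
    filter_upwards [hae] with lam hlam
    rw [WaveAux.psiApprox_eq hκ hε h2ε hlam]
  have hIntTendsto : Tendsto (fun ε : ℝ => ∫ lam, (1 - WaveAux.psiC κ ε lam) ^ 2 ∂(ν y))
      (𝓝[>] (0:ℝ)) (𝓝 0) := by
    have hDC : Tendsto (fun ε : ℝ => ∫ lam, (1 - WaveAux.psiC κ ε lam) ^ 2 ∂(ν y))
        (𝓝[>] (0:ℝ)) (𝓝 (∫ _ : ℝ, (0:ℝ) ∂(ν y))) := by
      apply MeasureTheory.tendsto_integral_filter_of_dominated_convergence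
        (bound := fun _ => (4:ℝ))
      · filter_upwards [self_mem_nhdsWithin] with ε hε
        exact ((continuous_const.sub (WaveAux.psiC_cont hκ (ne_of_gt hε))).pow 2).aestronglyMeasurable
      · filter_upwards [self_mem_nhdsWithin] with ε hε
        refine Filter.Eventually.of_forall fun lam => ?_
        have hb := abs_le.mp (WaveAux.psiC_abs_le hκ hε lam)
        rw [Real.norm_eq_abs, abs_of_nonneg (sq_nonneg _)]
        nlinarith [hb.1, hb.2]
      · exact integrable_const 4
      · refine Filter.Eventually.of_forall fun lam => ?_
        have h := ((tendsto_const_nhds (x := (1:ℝ))).sub (WaveAux.psiC_tendsto hκ lam)).pow 2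
        simpa using h
    simpa using hDC
  have hvtendsto : Tendsto (fun ε : ℝ => trajectory L (fun t => phiApprox r ε t • y) r)
      (𝓝[>] (0:ℝ)) (𝓝 y) := by
    have hsq : Tendsto (fun ε : ℝ => ‖y - trajectory L (fun t => phiApprox r ε t • y) r‖ ^ 2)
        (𝓝[>] (0:ℝ)) (𝓝 0) := by
      refine hIntTendsto.congr' ?_
      filter_upwards [Ioo_mem_nhdsGT_of_mem
        (show (0:ℝ) ∈ Set.Ico (0:ℝ) (r/2) from ⟨le_rfl, by linarith⟩)] with ε hε
      have hε0 : 0 < ε := hε.1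
      have h2ε : 2 * ε < r := by have := hε.2; linarith
      rw [WaveAux.traj_eq L hLsa hκ hS y hε0 h2ε,
        WaveAux.norm_eq L hLsa hκ hε0.ne' y (ν y) (fun f hf => hνcfc f hf y)]
    have hnorm : Tendsto (fun ε : ℝ => ‖y - trajectory L (fun t => phiApprox r ε t • y) r‖)
        (𝓝[>] (0:ℝ)) (𝓝 0) := by
      have hsqrt := (Real.continuous_sqrt.tendsto 0).comp hsq
      rw [Real.sqrt_zero] at hsqrt
      refine hsqrt.congr fun ε => ?_
      exact Real.sqrt_sq (norm_nonneg _)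
    rw [tendsto_iff_norm_sub_tendsto_zero]
    exact hnorm.congr fun ε => (norm_sub_rev _ _)
  refine ⟨hpart1, hvtendsto, ?_⟩
  intro A hAc hyA
  have hmem : ∀ᶠ ε in 𝓝[>] (0:ℝ), trajectory L (fun t => phiApprox r ε t • y) r ∈
      {v : H | ∃ h : ℝ → H, LocallyIntegrable h volume ∧
        (∀ s : ℝ, h s ∈ A) ∧ v = trajectory L h r} := by
    filter_upwards [self_mem_nhdsWithin] with ε hε
    refine ⟨fun t => phiApprox r ε t • y, ?_, ?_, rfl⟩
    · rw [MeasureTheory.locallyIntegrable_iff]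
      intro K hK
      refine MeasureTheory.Measure.integrableOn_of_bounded (M := (1/ε^2) * ‖y‖)
        hK.measure_lt_top.ne
        (((WaveAux.phi_measurable r ε).aemeasurable.aestronglyMeasurable).smul
          aestronglyMeasurable_const) ?_
      refine Filter.Eventually.of_forall fun t => ?_
      rw [norm_smul]
      exact mul_le_mul_of_nonneg_right (WaveAux.phi_bound r ε hε t) (norm_nonneg y)
    · intro s
      show phiApprox r ε s • y ∈ A
      have hcs : phiApprox r ε s • y = ((phiApprox r ε s : ℝ) : ℂ) • y :=
        RCLike.real_smul_eq_coe_smul (K := ℂ) _ _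
      rw [hcs]
      exact A.smul_mem _ hyA
  exact mem_closure_of_tendsto hvtendsto hmem
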